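/- In a 7-dimensional algebra from the class TLb_7 (multiplication table as defined), if the Leibniz identity holds for all triples of basis vectors, then b_{13} = a_{15}, b_{14} = a_{14} - b_{23}, and b_{15} = b_{24} = a_{25} = 0. -/

import Mathlib

/-- In an algebra from TLb₇, if the Leibniz identity holds for all triples of
basis vectors, then b₁₃ = a₁₅, b₁₄ = a₁₄ - b₂₃ and b₁₅ = b₂₄ = a₂₅ = 0. -/
theorem TLb7_constraints {L : Type*} [AddCommGroup L] [Module ℂ L]
    (B : L →ₗ[ℂ] L →ₗ[ℂ] L) (e : Module.Basis (Fin 7) ℂ L)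
    (b00 b01 b11 a14 a15 a25 b12 b13 b14 b23 b15 b24 : ℂ)
    (h10 : B (e 1) (e 0) = e 2)
    (h20 : B (e 2) (e 0) = e 3)
    (h30 : B (e 3) (e 0) = e 4)
    (h40 : B (e 4) (e 0) = e 5)
    (h50 : B (e 5) (e 0) = e 6)
    (h02 : B (e 0) (e 2) = -(e 3))
    (h03 : B (e 0) (e 3) = -(e 4))
    (h04 : B (e 0) (e 4) = -(e 5))
    (h05 : B (e 0) (e 5) = -(e 6))
    (h00 : B (e 0) (e 0) = b00 • e 6)
    (h01 : B (e 0) (e 1) = -(e 2) + b01 • e 6)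
    (h11 : B (e 1) (e 1) = b11 • e 6)
    (h12 : B (e 1) (e 2) = a14 • e 4 + a15 • e 5 + b12 • e 6)
    (h21 : B (e 2) (e 1) = -(a14 • e 4 + a15 • e 5 + b12 • e 6))
    (h13 : B (e 1) (e 3) = a14 • e 5 + b13 • e 6)
    (h31 : B (e 3) (e 1) = -(a14 • e 5 + b13 • e 6))
    (h14 : B (e 1) (e 4) = (-a25) • e 5 + b14 • e 6)
    (h41 : B (e 4) (e 1) = -((-a25) • e 5 + b14 • e 6))
    (h23 : B (e 2) (e 3) = a25 • e 5 + b23 • e 6)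
    (h32 : B (e 3) (e 2) = -(a25 • e 5 + b23 • e 6))
    (h15 : B (e 1) (e 5) = b15 • e 6)
    (h51 : B (e 5) (e 1) = -(b15 • e 6))
    (h24 : B (e 2) (e 4) = b24 • e 6)
    (h42 : B (e 4) (e 2) = -(b24 • e 6))
    (h22 : B (e 2) (e 2) = 0) (h33 : B (e 3) (e 3) = 0)
    (h44 : B (e 4) (e 4) = 0) (h55 : B (e 5) (e 5) = 0)
    (h25 : B (e 2) (e 5) = 0) (h52 : B (e 5) (e 2) = 0)
    (h34 : B (e 3) (e 4) = 0) (h43 : B (e 4) (e 3) = 0)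
    (h35 : B (e 3) (e 5) = 0) (h53 : B (e 5) (e 3) = 0)
    (h45 : B (e 4) (e 5) = 0) (h54 : B (e 5) (e 4) = 0)
    (h6 : ∀ j : Fin 7, B (e 6) (e j) = 0 ∧ B (e j) (e 6) = 0)
    (hleib : ∀ i j k : Fin 7,
      B (e i) (B (e j) (e k)) = B (B (e i) (e j)) (e k) - B (B (e i) (e k)) (e j)) :
    b13 = a15 ∧ b14 = a14 - b23 ∧ b15 = 0 ∧ b24 = 0 ∧ a25 = 0 := by

  have h6a : ∀ j : Fin 7, B (e 6) (e j) = 0 := fun j => (h6 j).1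
  have h6b : ∀ j : Fin 7, B (e j) (e 6) = 0 := fun j => (h6 j).2
  have rep : ∀ v w : L, v = w → e.repr v 6 = e.repr w 6 := by
    intro v w h; rw [h]
  have H1 := rep _ _ (hleib 0 1 2)
  have H2 := rep _ _ (hleib 0 1 3)
  have H3 := rep _ _ (hleib 0 2 3)
  have H4 := rep _ _ (hleib 0 1 4)
  have H5 := rep _ _ (hleib 1 2 3)
  simp only [h00,h01,h02,h03,h04,h05,h10,h20,h30,h40,h50,h11,h12,h21,h13,h31,
    h14,h41,h23,h32,h15,h51,h24,h42,h22,h33,h44,h55,h25,h52,h34,h43,h35,h53,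
    h45,h54,h6a,h6b,map_add,map_smul,map_neg,map_sub,map_zero,
    LinearMap.add_apply,LinearMap.smul_apply,LinearMap.neg_apply,
    LinearMap.zero_apply,LinearMap.map_zero,smul_zero,smul_neg,neg_neg,
    Module.Basis.repr_self,Finsupp.smul_apply,Finsupp.add_apply,Finsupp.sub_apply,
    Finsupp.neg_apply,Finsupp.single_apply,Finsupp.zero_apply] at H1 H2 H3 H4 H5
  norm_num [show ((5:Fin 7) = 6) ↔ False from by decide] at H1 H2 H3 H4 H5
  have ha25 : a25 = 0 := by
    rcases H5 with h | h
    · exact h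
    · linear_combination (H3 + H4 - h) / 2
  exact ⟨by linear_combination -H1, by linear_combination H2,
    by linear_combination H3 + H4 - 2 * ha25, by linear_combination ha25 - H3, ha25⟩
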